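/- The functions x ↦ sint²(x²) and x ↦ x²·sint²(x²) are integrable on ℝ, and the constants A₁ := ∫_ℝ sint²(x²) dx and A₂ := ∫_ℝ x² sint²(x²) dx are strictly positive and finite. -/

import Mathlib

open MeasureTheory Real Filter Set Topology intervalIntegral

/-- `_root_.sinc x = sin x / x` for `x ≠ 0`, and `_root_.sinc 0 = 1`. -/
noncomputable def _root_.sinc (x : ℝ) : ℝ := if x = 0 then 1 else Real.sin x / x

/-- `sint x = 1 − (2/π) ∫₀ˣ _root_.sinc t dt`. -/
noncomputable def sint (x : ℝ) : ℝ := 1 - (2 / Real.pi) * ∫ t in (0:ℝ)..x, _root_.sinc t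

lemma continuous_sinc : Continuous _root_.sinc := by
  rw [continuous_iff_continuousAt]
  intro x
  rcases eq_or_ne x 0 with rfl | hx
  · rw [← continuousWithinAt_compl_self]
    have h1 : Tendsto (fun y : ℝ => Real.sin y / y) (nhdsWithin 0 {(0:ℝ)}ᶜ) (nhds 1) := by
      have := (Real.hasDerivAt_sin 0)
      rw [hasDerivAt_iff_tendsto_slope] at this
      have heq : slope Real.sin 0 = fun y : ℝ => Real.sin y / y := by
        funext y; simp [slope_def_field]
      rw [heq, Real.cos_zero] at this
      exact this
    have : _root_.sinc 0 = 1 := by simp [_root_.sinc]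
    rw [ContinuousWithinAt, this]
    refine h1.congr' ?_
    filter_upwards [self_mem_nhdsWithin] with y (hy : y ≠ 0)
    simp [_root_.sinc, hy]
  · have : ContinuousAt (fun y : ℝ => Real.sin y / y) x :=
      (Real.continuous_sin.continuousAt).div continuousAt_id hx
    refine this.congr ?_
    filter_upwards [isOpen_compl_singleton.mem_nhds hx] with y (hy : y ≠ 0)
    simp [_root_.sinc, hy]

lemma sinc_intervalIntegrable (a b : ℝ) : IntervalIntegrable _root_.sinc volume a b :=
  _root_.continuous_sinc.intervalIntegrable a b

lemma continuous_Si : Continuous (fun x : ℝ => ∫ t in (0:ℝ)..x, _root_.sinc t) :=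
  intervalIntegral.continuous_primitive sinc_intervalIntegrable 0

lemma continuous_sint : Continuous sint := by
  unfold sint
  exact continuous_const.sub (continuous_const.mul continuous_Si)

lemma sint_zero : sint 0 = 1 := by simp [sint]

lemma abs_integral_sinc_le {a b : ℝ} (ha : 0 < a) (hab : a ≤ b) :
    |∫ t in a..b, _root_.sinc t| ≤ 2 / a := by
  have hb : 0 < b := lt_of_lt_of_le ha hab
  have hsub : ∀ x ∈ uIcc a b, x ≠ 0 := by
    intro x hx
    rw [uIcc_of_le hab] at hx
    exact ne_of_gt (lt_of_lt_of_le ha hx.1)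
  have h0 : (0:ℝ) ∉ uIcc a b := fun h => hsub 0 h rfl
  have h1 : ∫ t in a..b, _root_.sinc t = ∫ t in a..b, t⁻¹ * Real.sin t := by
    apply intervalIntegral.integral_congr
    intro x hx
    have := hsub x hx
    simp [_root_.sinc, this, div_eq_inv_mul]
  have hparts : ∫ t in a..b, t⁻¹ * Real.sin t
      = b⁻¹ * (-Real.cos b) - a⁻¹ * (-Real.cos a)
        - ∫ t in a..b, (-(t^2)⁻¹) * (-Real.cos t) := by
    apply intervalIntegral.integral_mul_deriv_eq_deriv_mul_of_hasDerivAt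
    · exact ContinuousOn.inv₀ continuousOn_id hsub
    · exact (Real.continuous_cos.neg).continuousOn
    · intro x hx
      have hxne : x ≠ 0 := by
        rw [min_eq_left hab, max_eq_right hab] at hx
        exact ne_of_gt (lt_trans ha hx.1)
      simpa using hasDerivAt_inv hxne
    · intro x hx
      have h := (Real.hasDerivAt_cos x).neg
      simp only [neg_neg] at h
      exact h
    · exact ((continuousOn_id.pow 2).inv₀ (fun x hx => pow_ne_zero 2 (hsub x hx))).neg.intervalIntegrable
    · exact Real.continuous_sin.intervalIntegrable a b
  have hinv2 : ∫ t in a..b, (t^2)⁻¹ = a⁻¹ - b⁻¹ := by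
    have : ∫ t in a..b, t ^ (-2 : ℤ) = (b ^ ((-2:ℤ) + 1) - a ^ ((-2:ℤ) + 1)) / ((-2:ℤ) + 1) := by
      apply integral_zpow
      right
      exact ⟨by decide, h0⟩
    simp only [zpow_neg, zpow_ofNat] at this ⊢
    rw [show ((-2:ℤ)+1) = -1 by ring] at this
    simp at this
    rw [show ∫ t in a..b, ((t:ℝ)^2)⁻¹ = ∫ t in a..b, ((t:ℝ)^(2:ℕ))⁻¹ from rfl, this]
    ring
  have hbound : |∫ t in a..b, (-(t^2)⁻¹) * (-Real.cos t)| ≤ a⁻¹ - b⁻¹ := by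
    rw [← hinv2]
    have h2 : |∫ t in a..b, (-(t^2)⁻¹) * (-Real.cos t)| ≤ ∫ t in a..b, |(-(t^2)⁻¹) * (-Real.cos t)| :=
      intervalIntegral.abs_integral_le_integral_abs hab
    refine h2.trans ?_
    apply intervalIntegral.integral_mono_on hab
    · exact (((continuousOn_id.pow 2).inv₀ (fun x hx => pow_ne_zero 2 (hsub x hx))).neg.mul
        Real.continuous_cos.neg.continuousOn).abs.intervalIntegrable
    · exact ((continuousOn_id.pow 2).inv₀ (fun x hx => pow_ne_zero 2 (hsub x hx))).intervalIntegrable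
    · intro x hx
      have hx2 : (0:ℝ) < x^2 := by
        have : 0 < x := lt_of_lt_of_le ha hx.1
        positivity
      rw [abs_mul, abs_neg, abs_neg, abs_of_pos (inv_pos.2 hx2)]
      calc (x^2)⁻¹ * |Real.cos x| ≤ (x^2)⁻¹ * 1 :=
            mul_le_mul_of_nonneg_left (Real.abs_cos_le_one x) (le_of_lt (inv_pos.2 hx2))
        _ = (x^2)⁻¹ := mul_one _
  rw [h1, hparts]
  have h3 : |b⁻¹ * (-Real.cos b) - a⁻¹ * (-Real.cos a)| ≤ b⁻¹ + a⁻¹ := by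
    refine (abs_sub _ _).trans ?_
    gcongr
    · rw [abs_mul, abs_neg]
      calc |b⁻¹| * |Real.cos b| ≤ |b⁻¹| * 1 := by
            gcongr; exact Real.abs_cos_le_one b
        _ = b⁻¹ := by rw [mul_one, abs_of_pos (inv_pos.2 hb)]
    · rw [abs_mul, abs_neg]
      calc |a⁻¹| * |Real.cos a| ≤ |a⁻¹| * 1 := by
            gcongr; exact Real.abs_cos_le_one a
        _ = a⁻¹ := by rw [mul_one, abs_of_pos (inv_pos.2 ha)]
  calc |b⁻¹ * (-Real.cos b) - a⁻¹ * (-Real.cos a) - ∫ t in a..b, (-(t^2)⁻¹) * (-Real.cos t)|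
      ≤ |b⁻¹ * (-Real.cos b) - a⁻¹ * (-Real.cos a)| + |∫ t in a..b, (-(t^2)⁻¹) * (-Real.cos t)| :=
        abs_sub _ _
    _ ≤ (b⁻¹ + a⁻¹) + (a⁻¹ - b⁻¹) := add_le_add h3 hbound
    _ = 2 / a := by rw [div_eq_mul_inv]; ring

noncomputable def Dk (n : ℕ) (u : ℝ) : ℝ := 1 + 2 * ∑ k ∈ Finset.range n, Real.cos (2*(k+1)*u)

lemma continuous_Dk (n : ℕ) : Continuous (Dk n) := by
  unfold Dk
  exact continuous_const.add (continuous_const.mul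
    (continuous_finset_sum _ (fun k _ => Real.continuous_cos.comp (continuous_const.mul continuous_id))))

lemma sin_mul_Dk (n : ℕ) (u : ℝ) : Real.sin ((2*n+1)*u) = Real.sin u * Dk n u := by
  induction n with
  | zero => simp [Dk]
  | succ n ih =>
    have key := Real.sin_sub_sin ((2*((n:ℝ)+1)+1)*u) ((2*(n:ℝ)+1)*u)
    have e1 : ((2*((n:ℝ)+1)+1)*u - (2*(n:ℝ)+1)*u)/2 = u := by ring
    have e2 : ((2*((n:ℝ)+1)+1)*u + (2*(n:ℝ)+1)*u)/2 = 2*((n:ℝ)+1)*u := by ring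
    rw [e1, e2] at key
    have hD : Dk (n+1) u = Dk n u + 2 * Real.cos (2*((n:ℝ)+1)*u) := by
      unfold Dk
      rw [Finset.sum_range_succ]
      push_cast
      ring
    push_cast
    push_cast at ih
    rw [hD]
    nlinarith [key, ih]

lemma integral_Dk (n : ℕ) : ∫ u in (0:ℝ)..(π/2), Dk n u = π/2 := by
  unfold Dk
  have hint : ∀ k ∈ Finset.range n, IntervalIntegrable (fun u => Real.cos (2*((k:ℝ)+1)*u)) volume 0 (π/2) :=
    fun k _ => (Real.continuous_cos.comp (continuous_const.mul continuous_id)).intervalIntegrable _ _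
  have h2 : IntervalIntegrable (fun u : ℝ => 2 * ∑ k ∈ Finset.range n, Real.cos (2*((k:ℝ)+1)*u)) volume 0 (π/2) :=
    Continuous.intervalIntegrable (by continuity) _ _
  rw [intervalIntegral.integral_add (intervalIntegrable_const) h2,
    intervalIntegral.integral_const_mul, intervalIntegral.integral_finset_sum hint]
  have hcos : ∀ k : ℕ, ∫ u in (0:ℝ)..(π/2), Real.cos (2*((k:ℝ)+1)*u) = 0 := by
    intro k
    have hc : (2*((k:ℝ)+1)) ≠ 0 := by positivity
    rw [intervalIntegral.integral_comp_mul_left (fun x => Real.cos x) hc]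
    rw [integral_cos]
    have : 2*((k:ℝ)+1)*(π/2) = (k+1 : ℕ) * π := by push_cast; ring
    rw [mul_zero, this, Real.sin_nat_mul_pi, Real.sin_zero]
    simp
  rw [Finset.sum_congr rfl (fun k _ => hcos k)]
  simp

noncomputable def gg (u : ℝ) : ℝ := (Real.sin u)⁻¹ - u⁻¹

lemma measurable_gg : Measurable gg := (Real.measurable_sin.inv).sub measurable_inv

lemma gg_abs_le {u : ℝ} (hu : u ∈ Set.Ioc 0 (π/2)) : |gg u| ≤ 2 := by
  obtain ⟨h0, h2⟩ := hu
  have hπ : (0:ℝ) < π := Real.pi_pos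
  have hπ4 : π ≤ 4 := by linarith [Real.pi_le_four]
  have hsin0 : 0 < Real.sin u := Real.sin_pos_of_pos_of_lt_pi h0 (lt_of_le_of_lt h2 (by linarith))
  have hjordan : 2/π * u ≤ Real.sin u := Real.mul_le_sin h0.le h2
  have hsinle : Real.sin u ≤ u := Real.sin_le h0.le
  have hnn : 0 ≤ gg u := by
    have : u⁻¹ ≤ (Real.sin u)⁻¹ := inv_anti₀ hsin0 hsinle
    simp only [gg]; linarith
  rw [abs_of_nonneg hnn]
  unfold gg
  rcases le_or_gt u 1 with h1 | h1
  · have hcube : u - u^3/4 < Real.sin u := by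
      have := Real.sin_gt_sub_cube h0
      linarith [pow_pos h0 3]
    have key : (Real.sin u)⁻¹ - u⁻¹ = (u - Real.sin u)/(u * Real.sin u) := by
      field_simp
    rw [key]
    have hb : u - Real.sin u ≤ u^3/4 := by linarith
    have hden : 2/π * u * u ≤ u * Real.sin u := by nlinarith
    have hdenpos : 0 < 2/π * u * u := by positivity
    calc (u - Real.sin u)/(u*Real.sin u) ≤ (u^3/4)/(2/π*u*u) := by
          apply div_le_div₀ (by positivity) hb hdenpos hden
      _ = π*u/8 := by field_simp; ring
      _ ≤ 2 := by nlinarith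
  · have hstep : (Real.sin u)⁻¹ - u⁻¹ ≤ (Real.sin u)⁻¹ := by
      have : (0:ℝ) ≤ u⁻¹ := inv_nonneg.2 h0.le
      linarith
    refine hstep.trans ?_
    have h2pi : 2/π ≤ Real.sin u := by
      have : 2/π * 1 ≤ 2/π * u := by
        apply mul_le_mul_of_nonneg_left h1.le (by positivity)
      linarith
    calc (Real.sin u)⁻¹ ≤ (2/π)⁻¹ := inv_anti₀ (by positivity) h2pi
      _ = π/2 := by field_simp
      _ ≤ 2 := by linarith

lemma integrableOn_sin_mul_gg (c : ℝ) :
    IntegrableOn (fun u => Real.sin (c*u) * gg u) (Set.Ioc 0 (π/2)) volume := by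
  apply Measure.integrableOn_of_bounded (M := 2)
  · exact (measure_Ioc_lt_top).ne
  · exact ((Real.measurable_sin.comp (measurable_const_mul c)).mul measurable_gg).aestronglyMeasurable
  · rw [ae_restrict_iff' measurableSet_Ioc]
    filter_upwards with u hu
    rw [Real.norm_eq_abs, abs_mul]
    calc |Real.sin (c*u)| * |gg u| ≤ 1 * 2 :=
          mul_le_mul (Real.abs_sin_le_one _) (gg_abs_le hu) (abs_nonneg _) zero_le_one
      _ = 2 := one_mul 2

lemma exp_I_im (θ : ℝ) : (Complex.exp ((θ:ℂ) * Complex.I)).im = Real.sin θ := by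
  rw [Complex.exp_mul_I]; simp [Complex.sin_ofReal_re]

lemma exp_I_mul_real_im (θ c : ℝ) : (Complex.exp ((θ:ℂ) * Complex.I) * (c:ℂ)).im = Real.sin θ * c := by
  rw [Complex.mul_im, exp_I_im]
  simp

open FourierTransform in
lemma tendsto_osc :
    Tendsto (fun n : ℕ => ∫ u in (0:ℝ)..(π/2), Real.sin ((2*n+1)*u) * gg u) atTop (𝓝 0) := by
  set G : ℝ → ℂ := Set.indicator (Set.Ioc 0 (π/2)) (fun u => (gg u : ℂ)) with hGdef
  have hggInt : IntegrableOn gg (Set.Ioc 0 (π/2)) volume := by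
    apply Measure.integrableOn_of_bounded (M := 2) (measure_Ioc_lt_top).ne
      measurable_gg.aestronglyMeasurable
    rw [ae_restrict_iff' measurableSet_Ioc]
    filter_upwards with u hu
    rw [Real.norm_eq_abs]; exact gg_abs_le hu
  have hG : Integrable G := by
    rw [hGdef, integrable_indicator_iff measurableSet_Ioc]
    exact hggInt.ofReal
  have hFour : Tendsto (𝓕 G) (cocompact ℝ) (𝓝 0) := Real.zero_at_infty_fourier G
  set ξ : ℕ → ℝ := fun n => -((2*n+1)/(2*π)) with hξ
  have hξtendsto : Tendsto ξ atTop atBot := by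
    apply tendsto_neg_atTop_atBot.comp
    apply Tendsto.atTop_div_const (by positivity)
    apply tendsto_atTop_add_const_right
    exact (tendsto_natCast_atTop_atTop).const_mul_atTop two_pos
  have hcocompact : Tendsto ξ atTop (cocompact ℝ) := by
    rw [cocompact_eq_atBot_atTop]
    exact hξtendsto.mono_right le_sup_left
  have hlim : Tendsto (fun n => (𝓕 G (ξ n)).im) atTop (𝓝 0) := by
    have := (Complex.continuous_im.tendsto 0).comp (hFour.comp hcocompact)
    exact this
  refine hlim.congr ?_
  intro n
  have hπ : (0:ℝ) < π := Real.pi_pos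
  have hchar : ∀ v : ℝ, (𝐞 (-(v * ξ n)) • G v) = Complex.exp (((2*n+1)*v : ℝ) * Complex.I) * G v := by
    intro v
    have hreal : 2 * π * (-(v * ξ n)) = (2*(n:ℝ)+1)*v := by
      rw [hξ]
      field_simp
    rw [Circle.smul_def, Real.fourierChar_apply, hreal]
    rfl
  have hint1 : Integrable (fun v => 𝐞 (-(v * ξ n)) • G v) :=
    by have := (Real.fourierIntegral_convergent_iff (ξ n)).2 hG
       simp only [Real.inner_apply] at this
       exact this
  have him : (𝓕 G (ξ n)).im = ∫ v : ℝ, (𝐞 (-(v * ξ n)) • G v).im := by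
    rw [Real.fourier_real_eq]
    exact (integral_im hint1).symm
  rw [him]
  have hptwise : ∀ v : ℝ, (𝐞 (-(v * ξ n)) • G v).im
      = Set.indicator (Set.Ioc 0 (π/2)) (fun u => Real.sin ((2*n+1)*u) * gg u) v := by
    intro v
    rw [hchar]
    by_cases hv : v ∈ Set.Ioc 0 (π/2)
    · rw [hGdef]
      simp only [Set.indicator_of_mem hv]
      exact exp_I_mul_real_im _ _
    · rw [hGdef]
      simp only [Set.indicator_of_notMem hv]
      simp
  simp_rw [hptwise]
  rw [MeasureTheory.integral_indicator measurableSet_Ioc]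
  rw [intervalIntegral.integral_of_le (by positivity)]

lemma Si_seq : Tendsto (fun n : ℕ => ∫ t in (0:ℝ)..((2*(n:ℝ)+1)*(π/2)), _root_.sinc t) atTop (𝓝 (π/2)) := by
  have hπ : (0:ℝ) < π := Real.pi_pos
  have key : ∀ n : ℕ, ∫ t in (0:ℝ)..((2*(n:ℝ)+1)*(π/2)), _root_.sinc t
      = π/2 - ∫ u in (0:ℝ)..(π/2), Real.sin ((2*(n:ℝ)+1)*u) * gg u := by
    intro n
    set N : ℝ := 2*(n:ℝ)+1 with hN
    have hN0 : N ≠ 0 := by positivity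
    have h1 : ∫ u in (0:ℝ)..(π/2), _root_.sinc (N*u) = N⁻¹ • ∫ t in (0:ℝ)..(N*(π/2)), _root_.sinc t := by
      have := intervalIntegral.integral_comp_mul_left _root_.sinc hN0 (a := 0) (b := π/2)
      simpa using this
    have h2 : ∫ t in (0:ℝ)..(N*(π/2)), _root_.sinc t = ∫ u in (0:ℝ)..(π/2), N * _root_.sinc (N*u) := by
      rw [intervalIntegral.integral_const_mul, h1, smul_eq_mul]
      field_simp
    have heq : EqOn (fun u => N * _root_.sinc (N*u)) (fun u => Dk n u - Real.sin (N*u) * gg u) (uIcc 0 (π/2)) := by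
      intro u hu
      rw [uIcc_of_le (by positivity)] at hu
      rcases eq_or_ne u 0 with rfl | hu0
      · simp [_root_.sinc, gg, Dk, hN]; ring
      · have hupos : 0 < u := lt_of_le_of_ne hu.1 (Ne.symm hu0)
        have hsinu : 0 < Real.sin u := Real.sin_pos_of_pos_of_lt_pi hupos (lt_of_le_of_lt hu.2 (by linarith))
        have hNu : N*u ≠ 0 := mul_ne_zero hN0 hu0
        have hDk : Real.sin (N*u) = Real.sin u * Dk n u := by
          rw [hN]; exact sin_mul_Dk n u
        simp only [_root_.sinc, if_neg hNu, gg]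
        rw [hDk]
        field_simp
        ring
    have h3 : ∫ u in (0:ℝ)..(π/2), N * _root_.sinc (N*u) = ∫ u in (0:ℝ)..(π/2), (Dk n u - Real.sin (N*u) * gg u) :=
      intervalIntegral.integral_congr heq
    have h4 : ∫ u in (0:ℝ)..(π/2), (Dk n u - Real.sin (N*u) * gg u)
        = (∫ u in (0:ℝ)..(π/2), Dk n u) - ∫ u in (0:ℝ)..(π/2), Real.sin (N*u) * gg u := by
      apply intervalIntegral.integral_sub
      · exact (continuous_Dk n).intervalIntegrable _ _
      · rw [intervalIntegrable_iff_integrableOn_Ioc_of_le (by positivity)]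
        exact integrableOn_sin_mul_gg N
    rw [h2, h3, h4, integral_Dk]
  have hlim := (tendsto_const_nhds (x := π/2) (f := (atTop : Filter ℕ))).sub tendsto_osc
  simp only [sub_zero] at hlim
  exact hlim.congr (fun n => (key n).symm)

lemma Si_near {x : ℝ} (hx : 0 < x) : |π/2 - ∫ t in (0:ℝ)..x, _root_.sinc t| ≤ 2 / x := by
  have hπ : (0:ℝ) < π := Real.pi_pos
  have hseq : Tendsto (fun n : ℕ => |(∫ t in (0:ℝ)..((2*(n:ℝ)+1)*(π/2)), _root_.sinc t) - ∫ t in (0:ℝ)..x, _root_.sinc t|)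
      atTop (𝓝 |π/2 - ∫ t in (0:ℝ)..x, _root_.sinc t|) := (Si_seq.sub tendsto_const_nhds).abs
  apply le_of_tendsto hseq
  filter_upwards [eventually_ge_atTop ⌈x⌉₊] with n hn
  have hnx : x ≤ (n:ℝ) := le_trans (Nat.le_ceil x) (by exact_mod_cast hn)
  have hx' : x ≤ (2*(n:ℝ)+1)*(π/2) := by nlinarith [Real.pi_gt_three]
  have hadj : (∫ t in (0:ℝ)..x, _root_.sinc t) + (∫ t in x..((2*(n:ℝ)+1)*(π/2)), _root_.sinc t)
      = ∫ t in (0:ℝ)..((2*(n:ℝ)+1)*(π/2)), _root_.sinc t :=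
    intervalIntegral.integral_add_adjacent_intervals (sinc_intervalIntegrable _ _) (sinc_intervalIntegrable _ _)
  have heq : (∫ t in (0:ℝ)..((2*(n:ℝ)+1)*(π/2)), _root_.sinc t) - ∫ t in (0:ℝ)..x, _root_.sinc t
      = ∫ t in x..((2*(n:ℝ)+1)*(π/2)), _root_.sinc t := by linarith
  rw [heq]
  exact abs_integral_sinc_le hx hx'

lemma abs_sint_le {y : ℝ} (hy : 0 < y) : |sint y| ≤ 2 / y := by
  have hπ : (0:ℝ) < π := Real.pi_pos
  have h1 : sint y = (2/π) * (π/2 - ∫ t in (0:ℝ)..y, _root_.sinc t) := by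
    unfold sint
    field_simp
  rw [h1, abs_mul, abs_of_pos (by positivity : (0:ℝ) < 2/π)]
  calc 2/π * |π/2 - ∫ t in (0:ℝ)..y, _root_.sinc t| ≤ 2/π * (2/y) := by
        gcongr
        exact Si_near hy
    _ ≤ 1 * (2/y) := by
        apply mul_le_mul_of_nonneg_right _ (by positivity)
        rw [div_le_one hπ]; linarith [Real.pi_gt_three]
    _ = 2/y := one_mul _

lemma integrableOn_comp_neg' {f : ℝ → ℝ} {a : ℝ} (hf : IntegrableOn (fun x => f (-x)) (Ioi a)) :
    IntegrableOn f (Iio (-a)) := by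
  have h2 := (integrable_indicator_iff measurableSet_Ioi).2 hf
  have h3 := h2.comp_neg
  have h4 : (fun x => Set.indicator (Ioi a) (fun y => f (-y)) (-x))
      = Set.indicator (Iio (-a)) f := by
    funext x
    by_cases hx : x < -a
    · rw [Set.indicator_of_mem (by simp only [Set.mem_Ioi]; linarith : -x ∈ Ioi a),
        Set.indicator_of_mem (by simpa using hx : x ∈ Iio (-a)), neg_neg]
    · rw [Set.indicator_of_notMem (by simp only [Set.mem_Ioi, not_lt]; linarith : -x ∉ Ioi a),
        Set.indicator_of_notMem (by simpa using hx)]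
  rw [h4] at h3
  exact (integrable_indicator_iff measurableSet_Iio).1 h3

/-- The functions `x ↦ sint²(x²)` and `x ↦ x²·sint²(x²)` are integrable on ℝ,
and the constants `A₁ = ∫_ℝ sint²(x²) dx` and `A₂ = ∫_ℝ x² sint²(x²) dx` are
strictly positive (finiteness is expressed by integrability). -/
theorem sint_sq_integrable_and_pos :
    Integrable (fun x : ℝ => (sint (x ^ 2)) ^ 2) ∧
    Integrable (fun x : ℝ => x ^ 2 * (sint (x ^ 2)) ^ 2) ∧
    0 < ∫ x : ℝ, (sint (x ^ 2)) ^ 2 ∧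
    0 < ∫ x : ℝ, x ^ 2 * (sint (x ^ 2)) ^ 2 := by
  have hc1 : Continuous (fun x : ℝ => (sint (x ^ 2)) ^ 2) :=
    (continuous_sint.comp (continuous_pow 2)).pow 2
  have hc2 : Continuous (fun x : ℝ => x ^ 2 * (sint (x ^ 2)) ^ 2) :=
    (continuous_pow 2).mul hc1
  have hbound1 : ∀ x : ℝ, 1 ≤ x → (sint (x ^ 2)) ^ 2 ≤ 4 * ((x:ℝ) ^ (-2 : ℝ)) := by
    intro x hx
    have hx0 : (0:ℝ) < x := lt_of_lt_of_le one_pos hx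
    have hx2 : (0:ℝ) < x^2 := by positivity
    have h := abs_sint_le hx2
    have h2 : (sint (x^2))^2 ≤ (2/x^2)^2 := by
      rw [← sq_abs]
      apply pow_le_pow_left₀ (abs_nonneg _) h
    have h2' : (sint (x^2))^2 ≤ 4/(x^2)^2 := by
      refine h2.trans (le_of_eq ?_)
      rw [div_pow]; norm_num
    have hx4 : x^2 ≤ (x^2)^2 := by nlinarith [sq_nonneg (x^2 - 1), sq_nonneg x]
    calc (sint (x^2))^2 ≤ 4/(x^2)^2 := h2'
      _ ≤ 4/(x^2) := div_le_div_of_nonneg_left (by norm_num) hx2 hx4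
      _ = 4 * ((x:ℝ) ^ (-2 : ℝ)) := by
          rw [Real.rpow_neg hx0.le, Real.rpow_two]
          ring
  have hbound2 : ∀ x : ℝ, 1 ≤ x → x^2 * (sint (x ^ 2)) ^ 2 ≤ 4 * ((x:ℝ) ^ (-2 : ℝ)) := by
    intro x hx
    have hx0 : (0:ℝ) < x := lt_of_lt_of_le one_pos hx
    have hx2 : (0:ℝ) < x^2 := by positivity
    have h := abs_sint_le hx2
    have h2 : (sint (x^2))^2 ≤ (2/x^2)^2 := by
      rw [← sq_abs]
      apply pow_le_pow_left₀ (abs_nonneg _) h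
    calc x^2 * (sint (x^2))^2 ≤ x^2 * (2/x^2)^2 := by
          apply mul_le_mul_of_nonneg_left h2 (le_of_lt hx2)
      _ = 4 / x^2 := by field_simp; ring
      _ = 4 * ((x:ℝ) ^ (-2 : ℝ)) := by
          rw [Real.rpow_neg hx0.le, Real.rpow_two]
          ring
  have hrpow : IntegrableOn (fun x : ℝ => 4 * x ^ (-2:ℝ)) (Ioi 1) volume :=
    (integrableOn_Ioi_rpow_of_lt (by norm_num) one_pos).const_mul 4
  have hrpow_nonneg : ∀ x : ℝ, x ∈ Ioi (1:ℝ) → 0 ≤ 4 * x ^ (-2:ℝ) := by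
    intro x hx
    have : (0:ℝ) < x := lt_trans one_pos hx
    positivity
  have hIoi1 : IntegrableOn (fun x : ℝ => (sint (x^2))^2) (Ioi 1) volume := by
    apply Integrable.mono hrpow hc1.aestronglyMeasurable.restrict
    rw [ae_restrict_iff' measurableSet_Ioi]
    filter_upwards with x hx
    rw [Real.norm_eq_abs, Real.norm_eq_abs, abs_of_nonneg (sq_nonneg _)]
    exact (hbound1 x (le_of_lt hx)).trans (le_abs_self _)
  have hIoi2 : IntegrableOn (fun x : ℝ => x^2 * (sint (x^2))^2) (Ioi 1) volume := by
    apply Integrable.mono hrpow hc2.aestronglyMeasurable.restrict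
    rw [ae_restrict_iff' measurableSet_Ioi]
    filter_upwards with x hx
    have hx2 : (0:ℝ) ≤ x^2 := sq_nonneg x
    rw [Real.norm_eq_abs, Real.norm_eq_abs, abs_of_nonneg (mul_nonneg hx2 (sq_nonneg _))]
    exact (hbound2 x (le_of_lt hx)).trans (le_abs_self _)
  have hIio1 : IntegrableOn (fun x : ℝ => (sint (x^2))^2) (Iio (-1)) volume := by
    have := integrableOn_comp_neg' (f := fun x : ℝ => (sint (x^2))^2) (a := 1) ?_
    · exact this
    · simpa only [neg_sq] using hIoi1
  have hIio2 : IntegrableOn (fun x : ℝ => x^2 * (sint (x^2))^2) (Iio (-1)) volume := by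
    have := integrableOn_comp_neg' (f := fun x : ℝ => x^2 * (sint (x^2))^2) (a := 1) ?_
    · exact this
    · simpa only [neg_sq] using hIoi2
  have hIcc1 : IntegrableOn (fun x : ℝ => (sint (x^2))^2) (Icc (-1) 1) volume :=
    hc1.integrableOn_Icc
  have hIcc2 : IntegrableOn (fun x : ℝ => x^2 * (sint (x^2))^2) (Icc (-1) 1) volume :=
    hc2.integrableOn_Icc
  have hcover : (univ : Set ℝ) ⊆ Iio (-1) ∪ (Icc (-1) 1 ∪ Ioi 1) := by
    intro x _
    rcases lt_or_ge x (-1) with h | h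
    · exact Or.inl h
    · rcases le_or_gt x 1 with h2 | h2
      · exact Or.inr (Or.inl ⟨h, h2⟩)
      · exact Or.inr (Or.inr h2)
  have hInt1 : Integrable (fun x : ℝ => (sint (x^2))^2) := by
    rw [← integrableOn_univ]
    exact (hIio1.union (hIcc1.union hIoi1)).mono_set hcover
  have hInt2 : Integrable (fun x : ℝ => x^2 * (sint (x^2))^2) := by
    rw [← integrableOn_univ]
    exact (hIio2.union (hIcc2.union hIoi2)).mono_set hcover
  -- positivity
  have ht : Tendsto (fun x : ℝ => sint (x^2)) (𝓝 0) (𝓝 1) := by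
    have hcont : ContinuousAt (fun x : ℝ => sint (x^2)) 0 :=
      (continuous_sint.comp (continuous_pow 2)).continuousAt
    have h0 : sint ((0:ℝ)^2) = 1 := by
      norm_num
      exact sint_zero
    rwa [ContinuousAt, h0] at hcont
  have hev : ∀ᶠ x in 𝓝 (0:ℝ), 0 < sint (x^2) := ht.eventually (eventually_gt_nhds one_pos)
  rw [Metric.eventually_nhds_iff] at hev
  obtain ⟨δ, hδ, hball⟩ := hev
  have hsub1 : Ioo (0:ℝ) δ ⊆ Function.support (fun x : ℝ => (sint (x^2))^2) := by
    intro x hx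
    have hdist : dist x 0 < δ := by
      rw [Real.dist_eq, sub_zero, abs_of_pos hx.1]
      exact hx.2
    have := hball hdist
    simp only [Function.mem_support]
    positivity
  have hsub2 : Ioo (0:ℝ) δ ⊆ Function.support (fun x : ℝ => x^2 * (sint (x^2))^2) := by
    intro x hx
    have hdist : dist x 0 < δ := by
      rw [Real.dist_eq, sub_zero, abs_of_pos hx.1]
      exact hx.2
    have h1 := hball hdist
    have h2 := hx.1
    simp only [Function.mem_support]
    positivity
  have hμ : (0:ENNReal) < volume (Ioo (0:ℝ) δ) := by
    rw [Real.volume_Ioo]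
    simpa using ENNReal.ofReal_pos.2 (by linarith)
  have hpos1 : 0 < ∫ x : ℝ, (sint (x^2))^2 := by
    rw [integral_pos_iff_support_of_nonneg (fun x => sq_nonneg _) hInt1]
    exact lt_of_lt_of_le hμ (measure_mono hsub1)
  have hpos2 : 0 < ∫ x : ℝ, x^2 * (sint (x^2))^2 := by
    rw [integral_pos_iff_support_of_nonneg
      (fun x => mul_nonneg (sq_nonneg _) (sq_nonneg _)) hInt2]
    exact lt_of_lt_of_le hμ (measure_mono hsub2)
  exact ⟨hInt1, hInt2, hpos1, hpos2⟩
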